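/- For every integer n ≥ 1, the border rank of the matrix multiplication tensor M_{⟨n,2,2⟩} is at least 3n. -/

import Mathlib

/-- A simple (rank-one) tensor in coordinates: `(u ⊗ v ⊗ w)_{ijk} = u_i v_j w_k`. -/
def simpleTensor {ι₁ ι₂ ι₃ : Type} (u : ι₁ → ℂ) (v : ι₂ → ℂ) (w : ι₃ → ℂ) :
    ι₁ → ι₂ → ι₃ → ℂ :=
  fun i j k => u i * v j * w k

/-- The set of tensors of rank at most `r`: sums of `r` simple tensors. -/
def rankAtMost (ι₁ ι₂ ι₃ : Type) (r : ℕ) : Set (ι₁ → ι₂ → ι₃ → ℂ) :=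
  {T | ∃ u : Fin r → ι₁ → ℂ, ∃ v : Fin r → ι₂ → ℂ, ∃ w : Fin r → ι₃ → ℂ,
    T = ∑ s : Fin r, simpleTensor (u s) (v s) (w s)}

/-- The border rank of a tensor: the least `r` such that `T` lies in the closure of the
set of tensors of rank at most `r`. -/
noncomputable def borderRank {ι₁ ι₂ ι₃ : Type} (T : ι₁ → ι₂ → ι₃ → ℂ) : ℕ :=
  sInf {r : ℕ | T ∈ closure (rankAtMost ι₁ ι₂ ι₃ r)}

/-- The matrix multiplication tensor `M_{⟨n,m,p⟩} = ∑ x^i_j ⊗ y^j_k ⊗ z^k_i`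
in coordinates: the first factor is indexed by pairs `(i,j)`, the second by `(j,k)`,
the third by `(k,i)`. -/
def matMulTensor (n m p : ℕ) :
    (Fin n × Fin m) → (Fin m × Fin p) → (Fin p × Fin n) → ℂ :=
  fun x y z => if x.2 = y.1 ∧ y.2 = z.1 ∧ z.2 = x.1 then 1 else 0

/-- The BCLRS tensor `T_{BCLRS,m} = M_{⟨m,2,2⟩} − x^1_1 ⊗ (y^1_1 ⊗ z^1_1 + y^1_2 ⊗ z^2_1)`
(indices written 1-based in the literature, 0-based here). -/
def TBCLRS (m : ℕ) : (Fin m × Fin 2) → (Fin 2 × Fin 2) → (Fin 2 × Fin m) → ℂ :=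
  fun x y z =>
    matMulTensor m 2 2 x y z -
      (if x.1.val = 0 ∧ x.2.val = 0 then 1 else 0) *
        ((if y.1.val = 0 ∧ y.2.val = 0 then 1 else 0) *
            (if z.1.val = 0 ∧ z.2.val = 0 then 1 else 0) +
          (if y.1.val = 0 ∧ y.2.val = 1 then 1 else 0) *
            (if z.1.val = 1 ∧ z.2.val = 0 then 1 else 0))


open Matrix Polynomial



lemma rank_sub_le_aux {ι ι' : Type} [Fintype ι] [Fintype ι'] [DecidableEq ι] (M N : Matrix ι ι' ℂ) :
    (M - N).rank ≤ M.rank + N.rank := by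
  simp only [Matrix.rank]
  have hle : LinearMap.range (M - N).mulVecLin ≤
      LinearMap.range M.mulVecLin ⊔ LinearMap.range N.mulVecLin := by
    rintro y ⟨x, rfl⟩
    have : (M - N).mulVecLin x = M.mulVecLin x - N.mulVecLin x := by
      simp [Matrix.mulVecLin, Matrix.sub_mulVec]
    rw [this]
    exact Submodule.sub_mem _ (Submodule.mem_sup_left ⟨x, rfl⟩)
      (Submodule.mem_sup_right ⟨x, rfl⟩)
  exact (Submodule.finrank_mono hle).trans
    (Submodule.finrank_add_le_finrank_add_finrank _ _)

lemma core_det_zero {ι : Type} [Fintype ι] [DecidableEq ι] {r : ℕ}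
    (hr : 2 * (r - Fintype.card ι) < Fintype.card ι)
    (X : Matrix ι (Fin r) ℂ) (Y : Matrix (Fin r) ι ℂ)
    (Dβ Dγ : Fin r → ℂ) (hA : IsUnit (X * Y).det) :
    ((X * diagonal Dβ * Y) * (X * Y).adjugate * (X * diagonal Dγ * Y)
      - (X * diagonal Dγ * Y) * (X * Y).adjugate * (X * diagonal Dβ * Y)).det = 0 := by
  set A := X * Y with hAdef
  set d := A.det with hd
  have h1 : A * A⁻¹ = 1 := Matrix.mul_nonsing_inv A hA
  have h2 : A⁻¹ * A = 1 := Matrix.nonsing_inv_mul A hA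
  have hadj : A.adjugate = d • A⁻¹ := by
    have h := Matrix.inv_def A
    rw [Ring.inverse_eq_inv'] at h
    rw [h, smul_smul, mul_inv_cancel₀ (IsUnit.ne_zero hA), one_smul]
  set B := A⁻¹ with hB
  set P : Matrix (Fin r) (Fin r) ℂ := Y * B * X with hP
  have hArank : A.rank = Fintype.card ι :=
    Matrix.rank_of_isUnit A ((Matrix.isUnit_iff_isUnit_det _).2 hA)
  clear_value d
  have hPP : P * P = P := by
    calc P * P = Y * B * (X * Y) * (B * X) := by
          rw [hP]; simp only [Matrix.mul_assoc]
      _ = Y * (B * A) * (B * X) := by rw [← hAdef]; simp only [Matrix.mul_assoc]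
      _ = Y * (B * X) := by rw [h2, Matrix.mul_one]
      _ = P := by rw [hP, Matrix.mul_assoc]
  have hXPY : X * P * Y = A := by
    calc X * P * Y = (X * Y) * B * (X * Y) := by rw [hP]; simp only [Matrix.mul_assoc]
      _ = A * B * A := by rw [← hAdef]
      _ = A := by rw [h1, Matrix.one_mul]
  have hBXe : ∀ (D : Fin r → ℂ) (D' : Fin r → ℂ),
      (X * diagonal D * Y) * A.adjugate * (X * diagonal D' * Y)
        = d • (X * (diagonal D * P * diagonal D') * Y) := by
    intro D D'
    rw [hadj, hP]
    rw [Matrix.mul_smul, Matrix.smul_mul]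
    congr 1
    simp only [Matrix.mul_assoc]
  clear_value A B P
  have hcomm : diagonal Dβ * diagonal Dγ = diagonal Dγ * diagonal Dβ := by
    rw [diagonal_mul_diagonal, diagonal_mul_diagonal]
    exact congrArg _ (funext fun i => mul_comm _ _)
  set K : Matrix (Fin r) (Fin r) ℂ :=
    diagonal Dβ * (P - 1) * diagonal Dγ - diagonal Dγ * (P - 1) * diagonal Dβ with hK
  have hKalt : K = diagonal Dβ * P * diagonal Dγ - diagonal Dγ * P * diagonal Dβ := by
    rw [hK]
    simp only [Matrix.mul_sub, Matrix.sub_mul, Matrix.mul_one]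
    rw [hcomm]
    abel
  have hF : (X * diagonal Dβ * Y) * A.adjugate * (X * diagonal Dγ * Y)
      - (X * diagonal Dγ * Y) * A.adjugate * (X * diagonal Dβ * Y)
      = d • (X * K * Y) := by
    rw [hBXe Dβ Dγ, hBXe Dγ Dβ, ← smul_sub, hKalt]
    rw [← Matrix.sub_mul, ← Matrix.mul_sub]
  rw [hF, Matrix.det_smul]
  suffices hdet : (X * K * Y).det = 0 by rw [hdet, mul_zero]
  by_contra hne
  have hunit : IsUnit (X * K * Y) := (Matrix.isUnit_iff_isUnit_det _).2 (isUnit_iff_ne_zero.2 hne)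
  have hrank_eq : (X * K * Y).rank = Fintype.card ι := Matrix.rank_of_isUnit _ hunit
  have hrankP : Fintype.card ι ≤ P.rank := by
    have h5 : A.rank ≤ P.rank := by
      calc A.rank = (X * (P * Y)).rank := by rw [← Matrix.mul_assoc, hXPY]
        _ ≤ (P * Y).rank := Matrix.rank_mul_le_right _ _
        _ ≤ P.rank := Matrix.rank_mul_le_left _ _
    omega
  have hrankP1 : (P - 1).rank ≤ r - Fintype.card ι := by
    have hker : LinearMap.range (P - 1).mulVecLin ≤ LinearMap.ker P.mulVecLin := by
      rintro y ⟨x, rfl⟩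
      have heq : P.mulVecLin ((P - 1).mulVecLin x) = (P * (P - 1)).mulVecLin x := by
        rw [Matrix.mulVecLin_mul]; rfl
      have hz : P * (P - 1) = 0 := by rw [Matrix.mul_sub, hPP, Matrix.mul_one, sub_self]
      rw [LinearMap.mem_ker, heq, hz]; simp
    have h3 : (P - 1).rank ≤ Module.finrank ℂ (LinearMap.ker P.mulVecLin) := by
      simpa [Matrix.rank] using Submodule.finrank_mono hker
    have h4 : P.rank + Module.finrank ℂ (LinearMap.ker P.mulVecLin) = r := by
      have := LinearMap.finrank_range_add_finrank_ker P.mulVecLin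
      simpa [Matrix.rank] using this
    omega
  have hb1 : (X * diagonal Dβ * (P - 1) * diagonal Dγ * Y).rank ≤ (P - 1).rank := by
    exact le_trans (Matrix.rank_mul_le_left _ _) (le_trans (Matrix.rank_mul_le_left _ _)
      (Matrix.rank_mul_le_right _ _))
  have hb2 : (X * diagonal Dγ * (P - 1) * diagonal Dβ * Y).rank ≤ (P - 1).rank := by
    exact le_trans (Matrix.rank_mul_le_left _ _) (le_trans (Matrix.rank_mul_le_left _ _)
      (Matrix.rank_mul_le_right _ _))
  have hsplit : X * K * Y = X * diagonal Dβ * (P - 1) * diagonal Dγ * Y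
      - X * diagonal Dγ * (P - 1) * diagonal Dβ * Y := by
    rw [hK, Matrix.mul_sub, Matrix.sub_mul]
    simp only [Matrix.mul_assoc]
  have hrank_le : (X * K * Y).rank ≤ 2 * (r - Fintype.card ι) := by
    rw [hsplit]
    have := rank_sub_le_aux (X * diagonal Dβ * (P - 1) * diagonal Dγ * Y)
      (X * diagonal Dγ * (P - 1) * diagonal Dβ * Y)
    omega
  omega

def sl (n : ℕ) (T : (Fin n × Fin 2) → (Fin 2 × Fin 2) → (Fin 2 × Fin n) → ℂ)
    (b : Fin 2 × Fin 2) : Matrix (Fin n × Fin 2) (Fin n × Fin 2) ℂ :=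
  Matrix.of fun a c => T a b (c.2, c.1)

noncomputable def fMat (n : ℕ)
    (T : (Fin n × Fin 2) → (Fin 2 × Fin 2) → (Fin 2 × Fin n) → ℂ) :
    Matrix (Fin n × Fin 2) (Fin n × Fin 2) ℂ :=
  sl n T (0,1) * (sl n T (0,0) + sl n T (1,1)).adjugate * sl n T (1,0)
    - sl n T (1,0) * (sl n T (0,0) + sl n T (1,1)).adjugate * sl n T (0,1)

noncomputable def gdet (n : ℕ)
    (T : (Fin n × Fin 2) → (Fin 2 × Fin 2) → (Fin 2 × Fin n) → ℂ) : ℂ :=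
  (fMat n T).det

lemma sl_sum {n r : ℕ} (U : Fin r → (Fin n × Fin 2) → ℂ) (V : Fin r → (Fin 2 × Fin 2) → ℂ)
    (W : Fin r → (Fin 2 × Fin n) → ℂ) (b : Fin 2 × Fin 2) :
    sl n (∑ s, simpleTensor (U s) (V s) (W s)) b
      = Matrix.of fun a c => ∑ s, U s a * V s b * W s (c.2, c.1) := by
  ext a c
  simp [sl, simpleTensor]

lemma slice_repr1 {n r : ℕ} (U : Fin r → (Fin n × Fin 2) → ℂ)
    (V : Fin r → (Fin 2 × Fin 2) → ℂ) (W : Fin r → (Fin 2 × Fin n) → ℂ) :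
    sl n (∑ s, simpleTensor (U s) (V s) (W s)) (0,0)
        + sl n (∑ s, simpleTensor (U s) (V s) (W s)) (1,1)
      = (Matrix.of fun a s => (V s (0,0) + V s (1,1)) * U s a)
          * (Matrix.of fun s c => W s (c.2, c.1)) := by
  ext a c
  rw [Matrix.add_apply, sl_sum, sl_sum, Matrix.mul_apply]
  simp only [Matrix.of_apply]
  rw [← Finset.sum_add_distrib]
  apply Finset.sum_congr rfl
  intro s _; ring

lemma slice_repr2 {n r : ℕ} (U : Fin r → (Fin n × Fin 2) → ℂ)
    (V : Fin r → (Fin 2 × Fin 2) → ℂ) (W : Fin r → (Fin 2 × Fin n) → ℂ)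
    (hα : ∀ s, V s (0,0) + V s (1,1) ≠ 0) (b : Fin 2 × Fin 2) :
    sl n (∑ s, simpleTensor (U s) (V s) (W s)) b
        = (Matrix.of fun a s => (V s (0,0) + V s (1,1)) * U s a)
            * diagonal (fun s => V s b / (V s (0,0) + V s (1,1)))
            * (Matrix.of fun s c => W s (c.2, c.1)) := by
  ext a c
  rw [sl_sum, Matrix.mul_apply]
  simp only [Matrix.of_apply, Matrix.mul_diagonal]
  apply Finset.sum_congr rfl
  intro s _
  have hs := hα s
  rw [div_eq_mul_inv]
  have : (V s (0,0) + V s (1,1)) * U s a * (V s b * (V s (0,0) + V s (1,1))⁻¹) * W s (c.2, c.1)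
      = U s a * V s b * W s (c.2, c.1) * ((V s (0,0) + V s (1,1)) * (V s (0,0) + V s (1,1))⁻¹) := by
    ring
  rw [this, mul_inv_cancel₀ hs, mul_one]


lemma det_coeff_top {ι : Type} [Fintype ι] [DecidableEq ι]
    (M : Matrix ι ι (Polynomial ℂ)) (k : ℕ) (hk : 1 ≤ k)
    (hdiag : ∀ a, (M a a - X ^ k).degree < (k : WithBot ℕ))
    (hoff : ∀ a c, a ≠ c → (M a c).degree < (k : WithBot ℕ)) :
    M.det.coeff (k * Fintype.card ι) = 1 := by
  have hdiag_eq : ∀ a, M a a = X ^ k + (M a a - X ^ k) := fun a => by ring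
  have hmono : ∀ a, (M a a).Monic := fun a => by
    rw [hdiag_eq a]; exact Polynomial.monic_X_pow_add (hdiag a)
  have hdeg_diag : ∀ a, (M a a).natDegree = k := by
    intro a
    have : (M a a).degree = k := by
      rw [hdiag_eq a]
      rw [add_comm]
      rw [Polynomial.degree_add_eq_right_of_degree_lt]
      · exact Polynomial.degree_X_pow k
      · rw [Polynomial.degree_X_pow]; exact hdiag a
    exact Polynomial.natDegree_eq_of_degree_eq_some this
  have hdeg_le : ∀ a c, (M a c).natDegree ≤ k := by
    intro a c
    by_cases h : a = c
    · subst h; exact le_of_eq (hdeg_diag a)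
    · rcases eq_or_ne (M a c) 0 with h0 | h0
      · simp [h0]
      · exact le_of_lt ((Polynomial.natDegree_lt_iff_degree_lt h0).mpr (hoff a c h))
  have hdeg_off : ∀ a c, a ≠ c → (M a c).natDegree ≤ k - 1 := by
    intro a c h
    rcases eq_or_ne (M a c) 0 with h0 | h0
    · simp [h0]
    · have := (Polynomial.natDegree_lt_iff_degree_lt h0).mpr (hoff a c h)
      omega
  rw [Matrix.det_apply, Polynomial.finset_sum_coeff]
  rw [Finset.sum_eq_single (1 : Equiv.Perm ι)]
  · -- identity term
    simp only [Equiv.Perm.sign_one, one_smul, Equiv.Perm.one_apply]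
    have hm : (∏ a : ι, M a a).Monic := Polynomial.monic_prod_of_monic _ _ fun a _ => hmono a
    have hnd : (∏ a : ι, M a a).natDegree = k * Fintype.card ι := by
      rw [Polynomial.natDegree_prod _ _ fun a _ => (hmono a).ne_zero]
      simp [hdeg_diag, Finset.sum_const, mul_comm]
    rw [← hnd, Polynomial.coeff_natDegree]
    exact hm.leadingCoeff
  · intro σ _ hσ
    rw [Polynomial.coeff_smul]
    have hc : (∏ a : ι, M (σ a) a).coeff (k * Fintype.card ι) = 0 := by
      apply Polynomial.coeff_eq_zero_of_natDegree_lt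
      have hle := Polynomial.natDegree_prod_le (Finset.univ : Finset ι) (fun a => M (σ a) a)
      have hsupp : 2 ≤ σ.support.card := Equiv.Perm.one_lt_card_support_of_ne_one hσ
      have hsum : ∑ a : ι, (M (σ a) a).natDegree
          ≤ k * Fintype.card ι - σ.support.card := by
        have hsplit : (∑ a ∈ Finset.univ \ σ.support, (M (σ a) a).natDegree)
            + ∑ a ∈ σ.support, (M (σ a) a).natDegree
            = ∑ a : ι, (M (σ a) a).natDegree :=
          Finset.sum_sdiff (Finset.subset_univ σ.support)
        have h1 : ∑ a ∈ σ.support, (M (σ a) a).natDegree ≤ σ.support.card * (k - 1) := by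
          calc ∑ a ∈ σ.support, (M (σ a) a).natDegree
              ≤ ∑ _a ∈ σ.support, (k - 1) :=
                Finset.sum_le_sum (fun a ha => hdeg_off _ _ (Equiv.Perm.mem_support.mp ha))
            _ = σ.support.card * (k - 1) := by rw [Finset.sum_const, smul_eq_mul]
        have h2 : ∑ a ∈ Finset.univ \ σ.support, (M (σ a) a).natDegree
            ≤ (Finset.univ \ σ.support).card * k := by
          calc ∑ a ∈ Finset.univ \ σ.support, (M (σ a) a).natDegree
              ≤ ∑ _a ∈ Finset.univ \ σ.support, k :=
                Finset.sum_le_sum (fun a _ => hdeg_le _ _)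
            _ = (Finset.univ \ σ.support).card * k := by rw [Finset.sum_const, smul_eq_mul]
        have hcard : (Finset.univ \ σ.support).card = Fintype.card ι - σ.support.card := by
          rw [Finset.card_sdiff_of_subset (Finset.subset_univ _), Finset.card_univ]
        have hsc : σ.support.card ≤ Fintype.card ι := by
          simpa using Finset.card_le_card (Finset.subset_univ σ.support)
        rw [hcard] at h2
        have e1 : σ.support.card * (k - 1) + σ.support.card = σ.support.card * k := by
          rw [← Nat.mul_succ]; congr 1; omega
        have e2 : (Fintype.card ι - σ.support.card) * k + σ.support.card * k
            = k * Fintype.card ι := by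
          rw [← Nat.add_mul]
          rw [Nat.mul_comm]
          congr 1; omega
        omega
      have hsc : σ.support.card ≤ Fintype.card ι := by
        simpa using Finset.card_le_card (Finset.subset_univ σ.support)
      have hcard2 : 2 ≤ Fintype.card ι := le_trans hsupp hsc
      calc (∏ a : ι, M (σ a) a).natDegree ≤ ∑ a : ι, (M (σ a) a).natDegree := hle
        _ ≤ k * Fintype.card ι - σ.support.card := hsum
        _ < k * Fintype.card ι := by
            have : 1 ≤ k * Fintype.card ι := by nlinarith
            omega
    rw [hc, smul_zero]
  · intro h
    exact absurd (Finset.mem_univ _) h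

lemma gdet_zero_of_good_decomp {n r : ℕ} (hr : 2 * (r - n * 2) < n * 2)
    (U : Fin r → (Fin n × Fin 2) → ℂ) (V : Fin r → (Fin 2 × Fin 2) → ℂ)
    (W : Fin r → (Fin 2 × Fin n) → ℂ)
    (hα : ∀ s, V s (0,0) + V s (1,1) ≠ 0)
    (hdet : IsUnit ((sl n (∑ s, simpleTensor (U s) (V s) (W s)) (0,0)
      + sl n (∑ s, simpleTensor (U s) (V s) (W s)) (1,1)).det)) :
    gdet n (∑ s, simpleTensor (U s) (V s) (W s)) = 0 := by
  have hcard : Fintype.card (Fin n × Fin 2) = n * 2 := by simp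
  unfold gdet fMat
  rw [slice_repr1 U V W, slice_repr2 U V W hα (0,1), slice_repr2 U V W hα (1,0)]
  apply core_det_zero
  · rw [hcard]; exact hr
  · rw [← slice_repr1 U V W]; exact hdet

lemma continuous_gdet_comp {Z : Type} [TopologicalSpace Z] (n : ℕ)
    (F : Z → ((Fin n × Fin 2) → (Fin 2 × Fin 2) → (Fin 2 × Fin n) → ℂ))
    (hF : ∀ a b c, Continuous fun z => F z a b c) :
    Continuous fun z => gdet n (F z) := by
  have hsl : ∀ b, Continuous fun z => sl n (F z) b := fun b =>
    continuous_matrix (fun a c => hF a b (c.2, c.1))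
  unfold gdet fMat
  exact ((((hsl (0,1)).matrix_mul (((hsl (0,0)).add (hsl (1,1))).matrix_adjugate)).matrix_mul
    (hsl (1,0))).sub ((((hsl (1,0)).matrix_mul (((hsl (0,0)).add
    (hsl (1,1))).matrix_adjugate)).matrix_mul (hsl (0,1))))).matrix_det

lemma sum_delta' {R : ℕ} (x y : ℕ) (hx : x < R) :
    ∑ s : Fin R, (if (s : ℕ) = x then (1:ℂ) else 0) * (if (s : ℕ) = y then 1 else 0)
      = if x = y then 1 else 0 := by
  rw [Finset.sum_eq_single (⟨x, hx⟩ : Fin R)]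
  · by_cases h : x = y
    · subst h; simp
    · simp [h]
  · intro s _ hs
    have hsx : (s : ℕ) ≠ x := fun hh => hs (Fin.ext hh)
    simp [hsx]
  · intro h
    exact absurd (Finset.mem_univ _) h

lemma sum_delta {n R : ℕ} (hR : n * 2 ≤ R) (a c : Fin n × Fin 2) :
    ∑ s : Fin R, (if (s : ℕ) = ((finProdFinEquiv a : Fin (n * 2)) : ℕ) then (1:ℂ) else 0) *
      (if (s : ℕ) = ((finProdFinEquiv c : Fin (n * 2)) : ℕ) then 1 else 0)
      = if a = c then 1 else 0 := by
  have ha : ((finProdFinEquiv a : Fin (n * 2)) : ℕ) < R :=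
    lt_of_lt_of_le (finProdFinEquiv a).isLt hR
  rw [sum_delta' _ _ ha]
  congr 1
  apply propext
  constructor
  · intro h; exact finProdFinEquiv.injective (Fin.val_injective h)
  · intro h; rw [h]

def pu0 {n R : ℕ} : Fin R → (Fin n × Fin 2) → ℂ :=
  fun s a => if (s : ℕ) = ((finProdFinEquiv a : Fin (n * 2)) : ℕ) then 1 else 0

def pw0 {n R : ℕ} : Fin R → (Fin 2 × Fin n) → ℂ :=
  fun s z => if (s : ℕ) = ((finProdFinEquiv (z.2, z.1) : Fin (n * 2)) : ℕ) then 1 else 0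

def pv0 : (Fin 2 × Fin 2) → ℂ := fun b => if b = (0,0) then 1 else 0

lemma pv0_00 : pv0 (0,0) = 1 := if_pos rfl
lemma pv0_11 : pv0 (1,1) = 0 := if_neg (by decide)

lemma gdet_vanish_aux {n R : ℕ} (hR2 : n * 2 ≤ R) (hr : 2 * (R - n * 2) < n * 2)
    (u : Fin R → (Fin n × Fin 2) → ℂ) (v : Fin R → (Fin 2 × Fin 2) → ℂ)
    (w : Fin R → (Fin 2 × Fin n) → ℂ) :
    gdet n (∑ s, simpleTensor (u s) (v s) (w s)) = 0 := by
  set α : Fin R → ℂ := fun s => v s (0,0) + v s (1,1) with hα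
  set U : ℂ → Fin R → (Fin n × Fin 2) → ℂ := fun ε s a => u s a + ε * pu0 s a with hU
  set V : ℂ → Fin R → (Fin 2 × Fin 2) → ℂ := fun ε s b => v s b + ε * pv0 b with hV
  set W : ℂ → Fin R → (Fin 2 × Fin n) → ℂ := fun ε s z => w s z + ε * pw0 s z with hW
  set Tt : ℂ → ((Fin n × Fin 2) → (Fin 2 × Fin 2) → (Fin 2 × Fin n) → ℂ) :=
    fun ε => ∑ s, simpleTensor (U ε s) (V ε s) (W ε s) with hTt
  have hT0 : Tt 0 = ∑ s, simpleTensor (u s) (v s) (w s) := by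
    funext a b c
    show (∑ s, simpleTensor (U 0 s) (V 0 s) (W 0 s)) a b c
      = (∑ s, simpleTensor (u s) (v s) (w s)) a b c
    simp only [Finset.sum_apply, simpleTensor]
    apply Finset.sum_congr rfl
    intro s _
    simp only [hU, hV, hW]
    ring
  have hVsum : ∀ ε s, V ε s (0,0) + V ε s (1,1) = α s + ε := by
    intro ε s
    simp only [hV, hα, pv0_00, pv0_11]
    ring
  set Mp : Matrix (Fin n × Fin 2) (Fin n × Fin 2) (Polynomial ℂ) := Matrix.of fun a c =>
    ∑ s : Fin R, (C (u s a) + C (pu0 s a) * X) * (C (α s) + X)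
      * (C (w s (c.2, c.1)) + C (pw0 s (c.2, c.1)) * X) with hMp
  have expand : ∀ p q rr t z : ℂ,
      (C p + C q * X) * (C rr + X) * (C t + C z * X)
        = C (q * z) * X ^ 3 + C (p * z + q * rr * z + q * t) * X ^ 2
          + C (p * rr * z + p * t + q * rr * t) * X + C (p * rr * t) := by
    intros p q rr t z
    simp only [_root_.map_mul, _root_.map_add]
    ring
  have hdelta : ∀ a c : Fin n × Fin 2,
      (∑ s : Fin R, pu0 s a * pw0 s (c.2, c.1)) = if a = c then (1:ℂ) else 0 := by
    intro a c
    exact sum_delta hR2 a c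
  have hentry : ∀ a c, Mp a c
      = C (if a = c then (1:ℂ) else 0) * X ^ 3
        + C (∑ s : Fin R, (u s a * pw0 s (c.2, c.1) + pu0 s a * α s * pw0 s (c.2, c.1)
            + pu0 s a * w s (c.2, c.1))) * X ^ 2
        + C (∑ s : Fin R, (u s a * α s * pw0 s (c.2, c.1) + u s a * w s (c.2, c.1)
            + pu0 s a * α s * w s (c.2, c.1))) * X
        + C (∑ s : Fin R, u s a * α s * w s (c.2, c.1)) := by
    intro a c
    rw [hMp]
    simp only [Matrix.of_apply]
    rw [Finset.sum_congr rfl (fun s _ => expand (u s a) (pu0 s a) (α s)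
      (w s (c.2, c.1)) (pw0 s (c.2, c.1)))]
    simp only [Finset.sum_add_distrib, ← Finset.sum_mul, ← map_sum]
    rw [hdelta a c]
  have hMp_det_ne : Mp.det ≠ 0 := by
    intro h0
    have h1 : Mp.det.coeff (3 * Fintype.card (Fin n × Fin 2)) = 1 := by
      apply det_coeff_top Mp 3 (by norm_num)
      · intro a
        have heq : Mp a a - X ^ 3
            = C (∑ s : Fin R, (u s a * pw0 s (a.2, a.1) + pu0 s a * α s * pw0 s (a.2, a.1)
                + pu0 s a * w s (a.2, a.1))) * X ^ 2
              + C (∑ s : Fin R, (u s a * α s * pw0 s (a.2, a.1) + u s a * w s (a.2, a.1)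
                + pu0 s a * α s * w s (a.2, a.1))) * X
              + C (∑ s : Fin R, u s a * α s * w s (a.2, a.1)) := by
          rw [hentry a a, if_pos rfl, _root_.map_one, one_mul]
          ring
        rw [heq]
        exact lt_of_le_of_lt Polynomial.degree_quadratic_le (by norm_num)
      · intro a c h
        have heq : Mp a c
            = C (∑ s : Fin R, (u s a * pw0 s (c.2, c.1) + pu0 s a * α s * pw0 s (c.2, c.1)
                + pu0 s a * w s (c.2, c.1))) * X ^ 2
              + C (∑ s : Fin R, (u s a * α s * pw0 s (c.2, c.1) + u s a * w s (c.2, c.1)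
                + pu0 s a * α s * w s (c.2, c.1))) * X
              + C (∑ s : Fin R, u s a * α s * w s (c.2, c.1)) := by
          rw [hentry a c, if_neg h, _root_.map_zero, zero_mul, zero_add]
        rw [heq]
        exact lt_of_le_of_lt Polynomial.degree_quadratic_le (by norm_num)
    rw [h0] at h1
    simp at h1
  have hsl_eq : ∀ (ε : ℂ) b, sl n (Tt ε) b
      = Matrix.of fun a c => ∑ s, U ε s a * V ε s b * W ε s (c.2, c.1) :=
    fun ε b => sl_sum (U ε) (V ε) (W ε) b
  have hMp_eval : ∀ ε : ℂ, (Mp.map fun p => Polynomial.eval ε p)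
      = sl n (Tt ε) (0,0) + sl n (Tt ε) (1,1) := by
    intro ε
    ext a c
    rw [Matrix.map_apply, Matrix.add_apply, hsl_eq, hsl_eq]
    simp only [Matrix.of_apply]
    rw [hMp]
    simp only [Matrix.of_apply]
    rw [Polynomial.eval_finset_sum, ← Finset.sum_add_distrib]
    apply Finset.sum_congr rfl
    intro s _
    simp only [Polynomial.eval_mul, Polynomial.eval_add, Polynomial.eval_C, Polynomial.eval_X]
    simp only [hU, hV, hW, hα, pv0_00, pv0_11]
    ring
  set Bad : Set ℂ := {ε | Polynomial.eval ε Mp.det = 0} ∪ Set.range (fun s => -α s) with hBad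
  have hBadFin : Bad.Finite :=
    (Polynomial.finite_setOf_isRoot hMp_det_ne).union (Set.finite_range _)
  have hgood : ∀ ε ∉ Bad, gdet n (Tt ε) = 0 := by
    intro ε hε
    have hαne : ∀ s, V ε s (0,0) + V ε s (1,1) ≠ 0 := by
      intro s hzero
      rw [hVsum] at hzero
      apply hε
      right
      exact ⟨s, by linear_combination -hzero⟩
    have hdeteq : (sl n (Tt ε) (0,0) + sl n (Tt ε) (1,1)).det = Polynomial.eval ε Mp.det := by
      rw [← hMp_eval ε]
      exact (RingHom.map_det (Polynomial.evalRingHom ε) Mp).symm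
    have hdet : IsUnit ((sl n (Tt ε) (0,0) + sl n (Tt ε) (1,1)).det) := by
      rw [hdeteq]
      apply isUnit_iff_ne_zero.2
      intro hz
      exact hε (Or.inl hz)
    show gdet n (∑ s, simpleTensor (U ε s) (V ε s) (W ε s)) = 0
    exact gdet_zero_of_good_decomp hr (U ε) (V ε) (W ε) hαne hdet
  have hcont : Continuous fun ε => gdet n (Tt ε) := by
    apply continuous_gdet_comp
    intro a b c
    show Continuous fun ε => (∑ s, simpleTensor (U ε s) (V ε s) (W ε s)) a b c
    simp only [Finset.sum_apply, simpleTensor]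
    apply continuous_finset_sum
    intro s _
    simp only [hU, hV, hW]
    fun_prop
  have hclosed : IsClosed {ε : ℂ | gdet n (Tt ε) = 0} := isClosed_eq hcont continuous_const
  have hdense : Dense Badᶜ := Set.Countable.dense_compl ℂ hBadFin.countable
  have hDS : Dense {ε : ℂ | gdet n (Tt ε) = 0} := hdense.mono (fun ε hε => hgood ε hε)
  have h0mem : (0 : ℂ) ∈ {ε : ℂ | gdet n (Tt ε) = 0} := by
    rw [← hclosed.closure_eq, hDS.closure_eq]
    trivial
  rw [← hT0]
  exact h0mem

lemma gdet_vanish {n : ℕ} (hn : 1 ≤ n)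
    (T : (Fin n × Fin 2) → (Fin 2 × Fin 2) → (Fin 2 × Fin n) → ℂ)
    (hT : T ∈ rankAtMost (Fin n × Fin 2) (Fin 2 × Fin 2) (Fin 2 × Fin n) (3 * n - 1)) :
    gdet n T = 0 := by
  obtain ⟨u, v, w, hTeq⟩ := hT
  rw [hTeq]
  exact gdet_vanish_aux (by omega) (by omega) u v w

lemma rankAtMost_mono {ι₁ ι₂ ι₃ : Type} {r r' : ℕ} (h : r ≤ r') :
    rankAtMost ι₁ ι₂ ι₃ r ⊆ rankAtMost ι₁ ι₂ ι₃ r' := by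
  rintro T ⟨u, v, w, rfl⟩
  refine ⟨fun s => if h' : (s : ℕ) < r then u ⟨s, h'⟩ else 0,
    fun s => if h' : (s : ℕ) < r then v ⟨s, h'⟩ else 0,
    fun s => if h' : (s : ℕ) < r then w ⟨s, h'⟩ else 0, ?_⟩
  funext a b c
  simp only [Finset.sum_apply, simpleTensor]
  have key : ∀ s : Fin r',
      (if h' : (s : ℕ) < r then u ⟨s, h'⟩ else 0) a *
        (if h' : (s : ℕ) < r then v ⟨s, h'⟩ else 0) b *
        (if h' : (s : ℕ) < r then w ⟨s, h'⟩ else 0) c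
      = if h' : (s : ℕ) < r then u ⟨s, h'⟩ a * v ⟨s, h'⟩ b * w ⟨s, h'⟩ c else 0 := by
    intro s
    split <;> simp
  rw [Finset.sum_congr rfl (fun s _ => key s)]
  rw [Fin.sum_univ_eq_sum_range
    (fun m => if h' : m < r then u ⟨m, h'⟩ a * v ⟨m, h'⟩ b * w ⟨m, h'⟩ c else 0) r']
  rw [← Finset.sum_subset (Finset.range_subset_range.mpr h)
    (fun x _ hx => dif_neg (by simpa using hx))]
  rw [← Fin.sum_univ_eq_sum_range
    (fun m => if h' : m < r then u ⟨m, h'⟩ a * v ⟨m, h'⟩ b * w ⟨m, h'⟩ c else 0) r]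
  apply Finset.sum_congr rfl
  intro s _
  rw [dif_pos s.isLt]

lemma matmul_mem (n : ℕ) :
    matMulTensor n 2 2 ∈ rankAtMost (Fin n × Fin 2) (Fin 2 × Fin 2) (Fin 2 × Fin n)
      (n * 2 * 2) := by
  set q : ((Fin n × Fin 2) × Fin 2) ≃ Fin (n * 2 * 2) :=
    (Equiv.prodCongr finProdFinEquiv (Equiv.refl (Fin 2))).trans finProdFinEquiv with hq
  refine ⟨fun s a => if a = (q.symm s).1 then 1 else 0,
    fun s b => if b = ((q.symm s).1.2, (q.symm s).2) then 1 else 0,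
    fun s z => if z = ((q.symm s).2, (q.symm s).1.1) then 1 else 0, ?_⟩
  funext x y z
  simp only [Finset.sum_apply, simpleTensor]
  rw [← Equiv.sum_comp q (fun s =>
    (if x = (q.symm s).1 then (1:ℂ) else 0) * (if y = ((q.symm s).1.2, (q.symm s).2) then 1 else 0)
      * (if z = ((q.symm s).2, (q.symm s).1.1) then 1 else 0))]
  simp only [Equiv.symm_apply_apply]
  rw [Finset.sum_eq_single (x, z.1)]
  · simp only [if_pos rfl, one_mul]
    unfold matMulTensor
    by_cases h1 : y.1 = x.2 <;> by_cases h2 : y.2 = z.1 <;> by_cases h3 : z.2 = x.1 <;>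
      simp [Prod.ext_iff, h1, h2, h3, eq_comm]
  · intro t _ ht
    rcases eq_or_ne x t.1 with h1 | h1
    · rcases eq_or_ne z (t.2, t.1.1) with h3 | h3
      · exfalso
        apply ht
        have ht2 : t.2 = z.1 := (congrArg Prod.fst h3).symm
        exact Prod.ext_iff.mpr ⟨h1.symm, ht2⟩
      · simp [h3]
    · simp [h1]
  · intro hmem
    exact absurd (Finset.mem_univ _) hmem

lemma gdet_matmul_ne (n : ℕ) : gdet n (matMulTensor n 2 2) ≠ 0 := by
  have hA1 : sl n (matMulTensor n 2 2) (0,0) + sl n (matMulTensor n 2 2) (1,1) = 1 := by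
    ext ⟨i, j⟩ ⟨i', k⟩
    simp only [Matrix.add_apply, sl, Matrix.of_apply, matMulTensor, Matrix.one_apply,
      Prod.mk.injEq]
    by_cases hii : i = i' <;> fin_cases j <;> fin_cases k <;> simp [hii, eq_comm]
  have hA2A3 : sl n (matMulTensor n 2 2) (0,1) * sl n (matMulTensor n 2 2) (1,0)
      = diagonal (fun a : Fin n × Fin 2 => if a.2 = 0 then (1:ℂ) else 0) := by
    ext ⟨i, j⟩ ⟨i', k⟩
    rw [Matrix.mul_apply]
    simp only [sl, Matrix.of_apply, matMulTensor]
    rw [Finset.sum_eq_single ((i, 1) : Fin n × Fin 2)]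
    · simp only [Matrix.diagonal_apply, Prod.mk.injEq]
      by_cases hii : i = i' <;> fin_cases j <;> fin_cases k <;> simp [hii, eq_comm]
    · intro e _ he
      rcases eq_or_ne e (i, 1) with rfl | hne
      · exact absurd rfl he
      · have : ¬((j = 0) ∧ ((1 : Fin 2) = e.2) ∧ e.1 = i) := by
          rintro ⟨-, h2, h3⟩
          exact hne (Prod.ext_iff.mpr ⟨h3, h2.symm⟩)
        rw [if_neg this, zero_mul]
    · intro hmem
      exact absurd (Finset.mem_univ _) hmem
  have hA3A2 : sl n (matMulTensor n 2 2) (1,0) * sl n (matMulTensor n 2 2) (0,1)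
      = diagonal (fun a : Fin n × Fin 2 => if a.2 = 1 then (1:ℂ) else 0) := by
    ext ⟨i, j⟩ ⟨i', k⟩
    rw [Matrix.mul_apply]
    simp only [sl, Matrix.of_apply, matMulTensor]
    rw [Finset.sum_eq_single ((i, 0) : Fin n × Fin 2)]
    · simp only [Matrix.diagonal_apply, Prod.mk.injEq]
      by_cases hii : i = i' <;> fin_cases j <;> fin_cases k <;> simp [hii, eq_comm]
    · intro e _ he
      rcases eq_or_ne e (i, 0) with rfl | hne
      · exact absurd rfl he
      · have : ¬((j = 1) ∧ ((0 : Fin 2) = e.2) ∧ e.1 = i) := by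
          rintro ⟨-, h2, h3⟩
          exact hne (Prod.ext_iff.mpr ⟨h3, h2.symm⟩)
        rw [if_neg this, zero_mul]
    · intro hmem
      exact absurd (Finset.mem_univ _) hmem
  unfold gdet fMat
  rw [hA1, Matrix.adjugate_one, Matrix.mul_one, Matrix.mul_one, hA2A3, hA3A2,
    Matrix.diagonal_sub, Matrix.det_diagonal]
  rw [Finset.prod_ne_zero_iff]
  intro a _
  rcases a with ⟨i, j⟩
  fin_cases j <;> norm_num

/-- For every `n ≥ 1`, the border rank of `M_{⟨n,2,2⟩}` is at least `3n`. -/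
theorem borderRank_matMul_lower_bound (n : ℕ) (hn : 1 ≤ n) :
    3 * n ≤ borderRank (matMulTensor n 2 2) := by
  have hgcont : Continuous (gdet n) := by
    apply continuous_gdet_comp n id
    intro a b c
    exact (continuous_apply _).comp ((continuous_apply _).comp (continuous_apply _))
  unfold borderRank
  refine le_csInf ⟨n * 2 * 2, ?_⟩ ?_
  · show matMulTensor n 2 2 ∈ closure
      (rankAtMost (Fin n × Fin 2) (Fin 2 × Fin 2) (Fin 2 × Fin n) (n * 2 * 2))
    exact subset_closure (matmul_mem n)
  intro r hr
  by_contra hlt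
  push_neg at hlt
  have hsub : matMulTensor n 2 2
      ∈ closure (rankAtMost (Fin n × Fin 2) (Fin 2 × Fin 2) (Fin 2 × Fin n) (3 * n - 1)) :=
    closure_mono (rankAtMost_mono (by omega)) hr
  have hzero : gdet n (matMulTensor n 2 2) = 0 := by
    have hclosed : IsClosed {T : (Fin n × Fin 2) → (Fin 2 × Fin 2) → (Fin 2 × Fin n) → ℂ |
        gdet n T = 0} := isClosed_eq hgcont continuous_const
    exact closure_minimal (fun T hT => gdet_vanish hn T hT) hclosed hsub
  exact gdet_matmul_ne n hzero
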